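/- Let Φ be a 2L×L complex matrix of full rank L satisfying Φ* I Φ = 0, where I = (0, -1; 1, 0) in L×L blocks. Write (a; b) = 2^{-1/2} (1, -i·1; 1, i·1) Φ. Then a and b are invertible and U := a b⁻¹ is a unitary L×L matrix. -/

import Mathlib

open Matrix

variable {L : ℕ}

/-- The matrix `ℐ = (0,-1;1,0)` in `L×L` blocks. -/
def Iop (L : ℕ) : Matrix (Fin L ⊕ Fin L) (Fin L ⊕ Fin L) ℂ :=
  Matrix.fromBlocks 0 (-1) 1 0

/-- The Cayley matrix `2^{-1/2} (1, -i·1; 1, i·1)`. -/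
noncomputable def cayley (L : ℕ) : Matrix (Fin L ⊕ Fin L) (Fin L ⊕ Fin L) ℂ :=
  ((Real.sqrt 2 : ℂ))⁻¹ •
    Matrix.fromBlocks 1 ((-Complex.I) • (1 : Matrix (Fin L) (Fin L) ℂ)) 1
      (Complex.I • (1 : Matrix (Fin L) (Fin L) ℂ))

lemma hs2 : ((Real.sqrt 2 : ℂ))⁻¹ * ((Real.sqrt 2 : ℂ))⁻¹ = 2⁻¹ := by
  rw [← mul_inv]
  have : ((Real.sqrt 2 : ℂ)) * ((Real.sqrt 2 : ℂ)) = 2 := by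
    norm_cast
    rw [Real.mul_self_sqrt (by norm_num)]
  rw [this]

lemma cayley_conjTranspose (L : ℕ) : (cayley L)ᴴ =
    ((Real.sqrt 2 : ℂ))⁻¹ •
    Matrix.fromBlocks 1 1 (Complex.I • (1 : Matrix (Fin L) (Fin L) ℂ))
      ((-Complex.I) • (1 : Matrix (Fin L) (Fin L) ℂ)) := by
  simp [cayley, conjTranspose_smul, fromBlocks_conjTranspose, conjTranspose_smul]

lemma two_mat : (2 : Matrix (Fin L) (Fin L) ℂ) = (2 : ℂ) • 1 := by
  rw [Algebra.smul_def, map_ofNat, mul_one]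

lemma cayley_unitary_left (L : ℕ) : (cayley L)ᴴ * cayley L = 1 := by
  rw [cayley_conjTranspose, cayley, smul_mul_assoc, mul_smul_comm, smul_smul, hs2,
    fromBlocks_multiply]
  simp only [Matrix.smul_mul, Matrix.mul_smul, one_mul, mul_one, smul_smul,
    Complex.I_mul_I, neg_mul, mul_neg, neg_neg, neg_smul]
  simp only [add_neg_cancel, neg_add_cancel, one_smul,
    ← two_smul ℂ (1 : Matrix (Fin L) (Fin L) ℂ)]
  rw [show (fromBlocks ((2:ℂ) • (1 : Matrix (Fin L) (Fin L) ℂ)) 0 0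
      ((2:ℂ) • (1 : Matrix (Fin L) (Fin L) ℂ))) = (2:ℂ) • fromBlocks 1 0 0 1 by
    rw [fromBlocks_smul]; simp]
  rw [smul_smul, fromBlocks_one]
  norm_num

lemma cayley_unitary_right (L : ℕ) : cayley L * (cayley L)ᴴ = 1 := by
  rw [mul_eq_one_comm]; exact cayley_unitary_left L

lemma cayley_Iop (L : ℕ) : cayley L * Iop L * (cayley L)ᴴ =
    fromBlocks ((-Complex.I) • (1 : Matrix (Fin L) (Fin L) ℂ)) 0 0
      (Complex.I • (1 : Matrix (Fin L) (Fin L) ℂ)) := by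
  rw [cayley_conjTranspose, cayley, Iop, smul_mul_assoc, smul_mul_assoc, mul_smul_comm,
    smul_smul, hs2, fromBlocks_multiply, fromBlocks_multiply]
  simp only [Matrix.smul_mul, Matrix.mul_smul, one_mul, mul_one, mul_zero, zero_mul,
    mul_neg, neg_mul, smul_smul, Complex.I_mul_I, neg_neg, neg_smul, one_smul, smul_zero,
    add_zero, zero_add, mul_neg_one, neg_zero, smul_neg]
  simp only [neg_add_cancel, add_neg_cancel, ← two_smul ℂ (Complex.I • (1 : Matrix (Fin L) (Fin L) ℂ)),
    ← two_smul ℂ (-(Complex.I • (1 : Matrix (Fin L) (Fin L) ℂ)))]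
  rw [show (fromBlocks ((2:ℂ) • (-(Complex.I • (1 : Matrix (Fin L) (Fin L) ℂ)))) 0 0
      ((2:ℂ) • (Complex.I • (1 : Matrix (Fin L) (Fin L) ℂ)))) =
      (2:ℂ) • fromBlocks (-(Complex.I • 1)) 0 0 (Complex.I • 1) by
    rw [fromBlocks_smul]; simp]
  rw [smul_smul]
  norm_num

lemma isUnit_of_rank_eq_card {n : ℕ} (M : Matrix (Fin n) (Fin n) ℂ) (h : M.rank = n) :
    IsUnit M := by
  rw [← Matrix.mulVec_injective_iff_isUnit]
  have hsurj : Function.Surjective M.mulVecLin := by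
    rw [← LinearMap.range_eq_top]
    apply Submodule.eq_top_of_finrank_eq
    rw [Module.finrank_pi]
    simpa [Matrix.rank] using h
  exact (LinearMap.injective_iff_surjective).mpr hsurj

/-- The upper block `a` of `2^{-1/2}(1,-i1;1,i1)Φ`. -/
noncomputable def aMat (Φ : Matrix (Fin L ⊕ Fin L) (Fin L) ℂ) : Matrix (Fin L) (Fin L) ℂ :=
  (cayley L * Φ).submatrix Sum.inl id

/-- The lower block `b` of `2^{-1/2}(1,-i1;1,i1)Φ`. -/
noncomputable def bMat (Φ : Matrix (Fin L ⊕ Fin L) (Fin L) ℂ) : Matrix (Fin L) (Fin L) ℂ :=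
  (cayley L * Φ).submatrix Sum.inr id

/-- if `Φ` is a `2L×L` matrix of full rank `L` with `Φ* ℐ Φ = 0` (an
`ℐ`-Lagrangian frame), then with `(a; b) = 2^{-1/2}(1,-i1;1,i1)Φ`, the matrices `a` and `b`
are invertible and `U = a b⁻¹` is unitary. -/
theorem stereographic_projection_unitary
    (Φ : Matrix (Fin L ⊕ Fin L) (Fin L) ℂ)
    (hrank : Φ.rank = L) (hiso : Φᴴ * Iop L * Φ = 0) :
    IsUnit (aMat Φ) ∧ IsUnit (bMat Φ)
    ∧ aMat Φ * (bMat Φ)⁻¹ ∈ Matrix.unitaryGroup (Fin L) ℂ := by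
  set a := aMat Φ with ha
  set b := bMat Φ with hb
  set Ψ := cayley L * Φ with hΨdef
  have hΨ : Ψ = fromRows a b := by
    rw [← fromRows_toRows Ψ]; rfl
  have hΦ : Φ = (cayley L)ᴴ * Ψ := by
    rw [hΨdef, ← Matrix.mul_assoc, cayley_unitary_left, Matrix.one_mul]
  -- key identity aᴴa = bᴴb
  have h0 : Ψᴴ * (fromBlocks ((-Complex.I) • (1 : Matrix (Fin L) (Fin L) ℂ)) 0 0
      (Complex.I • (1 : Matrix (Fin L) (Fin L) ℂ))) * Ψ = 0 := by
    rw [← cayley_Iop]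
    have hcc : ∀ (X : Matrix (Fin L ⊕ Fin L) (Fin L) ℂ),
        (cayley L)ᴴ * (cayley L * X) = X := fun X => by
      rw [← Matrix.mul_assoc, cayley_unitary_left, Matrix.one_mul]
    have heq : Ψᴴ * (cayley L * Iop L * (cayley L)ᴴ) * Ψ = Φᴴ * Iop L * Φ := by
      rw [hΨdef, conjTranspose_mul]
      simp only [Matrix.mul_assoc]
      rw [hcc, hcc]
    rw [heq, hiso]
  have key : aᴴ * a = bᴴ * b := by
    rw [hΨ, conjTranspose_fromRows_eq_fromCols_conjTranspose, Matrix.mul_assoc,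
      fromBlocks_mul_fromRows, fromCols_mul_fromRows] at h0
    simp only [Matrix.smul_mul, Matrix.mul_smul, Matrix.one_mul, Matrix.zero_mul,
      Matrix.mul_zero, add_zero, zero_add, neg_smul, mul_smul_comm] at h0
    have h1 : Complex.I • (bᴴ * b) = Complex.I • (aᴴ * a) := by
      simp only [Matrix.neg_mul, Matrix.smul_mul, Matrix.one_mul, Matrix.mul_neg,
        mul_smul_comm] at h0
      exact (neg_add_eq_zero.mp h0).symm
    exact (smul_right_injective _ Complex.I_ne_zero h1).symm
  have hPhiPhi : Φᴴ * Φ = aᴴ * a + bᴴ * b := by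
    have : Φᴴ * Φ = Ψᴴ * Ψ := by
      conv_rhs => rw [hΨdef, conjTranspose_mul, Matrix.mul_assoc,
        ← Matrix.mul_assoc (cayley L)ᴴ, cayley_unitary_left, Matrix.one_mul]
    rw [this, hΨ, conjTranspose_fromRows_eq_fromCols_conjTranspose,
      fromCols_mul_fromRows]
  have hunitPP : IsUnit (Φᴴ * Φ) := by
    open ComplexOrder in
    exact isUnit_of_rank_eq_card _ (by rw [rank_conjTranspose_mul_self, hrank])
  have hbb : IsUnit (bᴴ * b).det := by
    have h2 : Φᴴ * Φ = (2:ℂ) • (bᴴ * b) := by rw [hPhiPhi, key, two_smul]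
    rw [h2, isUnit_iff_isUnit_det, det_smul] at hunitPP
    exact isUnit_of_mul_isUnit_right hunitPP
  have hub : IsUnit b := by
    rw [det_mul] at hbb
    rw [isUnit_iff_isUnit_det]
    exact isUnit_of_mul_isUnit_right hbb
  have hua : IsUnit a := by
    have haa : IsUnit (aᴴ * a).det := by rw [key]; exact hbb
    rw [det_mul] at haa
    rw [isUnit_iff_isUnit_det]
    exact isUnit_of_mul_isUnit_right haa
  refine ⟨hua, hub, ?_⟩
  rw [mem_unitaryGroup_iff']
  have hdetb : IsUnit b.det := (isUnit_iff_isUnit_det b).mp hub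
  have hdetbH : IsUnit bᴴ.det := by rwa [det_conjTranspose, isUnit_star]
  calc star (a * b⁻¹) * (a * b⁻¹)
      = (bᴴ)⁻¹ * (aᴴ * a) * b⁻¹ := by
        rw [star_eq_conjTranspose, conjTranspose_mul, conjTranspose_nonsing_inv]
        simp only [Matrix.mul_assoc]
    _ = (bᴴ)⁻¹ * (bᴴ * b) * b⁻¹ := by rw [key]
    _ = 1 := by
        rw [← Matrix.mul_assoc, nonsing_inv_mul _ hdetbH,
          Matrix.one_mul, mul_nonsing_inv _ hdetb]
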